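/- Let X = {0,1} and let C be the set of all Dirac probability measures δ_x on X^∞ concentrated on binary sequences x whose limiting frequency of ones is 1/3 (i.e., lim_{n→∞} (1/n)·|{i ≤ n : x_i = 1}| = 1/3). Then V_C = h(1/3), where h(p) := −p log₂ p − (1−p) log₂(1−p); in particular, the i.i.d. Bernoulli measure β with parameter 1/3 attains sup_{μ∈C} D(μ,β) = h(1/3) = V_C. -/

import Mathlib

open MeasureTheory Filter
open scoped ENNReal

variable {X : Type} [Fintype X] [Nonempty X] [MeasurableSpace X] [DiscreteMeasurableSpace X]

/-- Cylinder set of sequences beginning with `x`. -/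
def cyl {X : Type} {n : ℕ} (x : Fin n → X) : Set (ℕ → X) :=
  {ω | ∀ i : Fin n, ω (i : ℕ) = x i}

/-- `p · log₂(p/q)` with the conventions `0 · log₂(0/q) = 0` and `p · log₂(p/0) = +∞` for `p > 0`. -/
noncomputable def klTerm (p q : ℝ) : EReal :=
  if p = 0 then 0 else if q = 0 then ⊤ else ((p * Real.logb 2 (p / q) : ℝ) : EReal)

/-- Expected cumulative KL divergence `d_n(μ,ρ)`. -/
noncomputable def klDiv (n : ℕ) (μ ρ : Measure (ℕ → X)) : EReal :=
  ∑ x : Fin n → X, klTerm (μ (cyl x)).toReal (ρ (cyl x)).toReal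

/-- Asymptotic average KL loss `D(μ,ρ)`. -/
noncomputable def Dbar (μ ρ : Measure (ℕ → X)) : EReal :=
  Filter.limsup (fun n : ℕ => (((n : ℝ)⁻¹ : ℝ) : EReal) * klDiv n μ ρ) Filter.atTop

/-- Minimax value `V_C`. -/
noncomputable def Vmin (C : Set (Measure (ℕ → X))) : EReal :=
  ⨅ ρ : {ρ : Measure (ℕ → X) // IsProbabilityMeasure ρ}, ⨆ μ ∈ C, Dbar μ ρ.1

/-- Countable mixture `Σ_k v_k μ_k`. -/
noncomputable def mixture (v : ℕ → ℝ) (μs : ℕ → Measure (ℕ → X)) : Measure (ℕ → X) :=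
  MeasureTheory.Measure.sum (fun k => ENNReal.ofReal (v k) • μs k)

/-- The binary entropy h(p) = −p log₂ p − (1−p) log₂(1−p). -/
noncomputable def binEnt (p : ℝ) : ℝ :=
  -(p * Real.logb 2 p) - (1 - p) * Real.logb 2 (1 - p)

/-! ### Auxiliary definitions -/

/-- prefix of a sequence -/
def pre {X : Type} (z : ℕ → X) (n : ℕ) : Fin n → X := fun i => z i

/-- count of ones in a finite binary word -/
def cnt {m : ℕ} (v : Fin m → Fin 2) : ℕ := (Finset.univ.filter (fun i => v i = 1)).card

/-- count of ones among the first `n` entries of a sequence -/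
def Kc (z : ℕ → Fin 2) (n : ℕ) : ℕ := ((Finset.range n).filter (fun i => z i = 1)).card

def Nb : ℕ → ℕ
  | 0 => 0
  | (t+1) => Nb t + 3*(t+1)

def Mb : ℕ → ℕ
  | 0 => 0
  | (t+1) => Mb t + (t+1)

/-! ### Basic cylinder lemmas -/

lemma measurable_cyl {X : Type} [MeasurableSpace X] [MeasurableSingletonClass X] {n : ℕ}
    (x : Fin n → X) : MeasurableSet (cyl x) := by
  have : cyl x = ⋂ i : Fin n, (fun ω : ℕ → X => ω (i : ℕ)) ⁻¹' {x i} := by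
    ext ω; simp [cyl, Set.mem_iInter]
  rw [this]
  exact MeasurableSet.iInter fun i => (measurable_pi_apply _) (measurableSet_singleton _)

lemma mem_cyl_iff {X : Type} {n : ℕ} (z : ℕ → X) (y : Fin n → X) :
    z ∈ cyl y ↔ y = pre z n := by
  constructor
  · intro h; funext i; exact (h i).symm
  · rintro rfl i; rfl

lemma cyl_anti {X : Type} (z : ℕ → X) {n m : ℕ} (h : n ≤ m) :
    cyl (pre z m) ⊆ cyl (pre z n) := by
  intro ω hω i
  exact hω (Fin.castLE h i)

lemma dirac_cyl_self {X : Type} [MeasurableSpace X] [MeasurableSingletonClass X] {n : ℕ}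
    (z : ℕ → X) : Measure.dirac z (cyl (pre z n)) = 1 := by
  rw [Measure.dirac_apply' _ (measurable_cyl _)]
  have : z ∈ cyl (pre z n) := (mem_cyl_iff z _).2 rfl
  simp [Set.indicator_of_mem this]

lemma dirac_cyl_ne {X : Type} [MeasurableSpace X] [MeasurableSingletonClass X] {n : ℕ}
    (z : ℕ → X) {y : Fin n → X} (h : y ≠ pre z n) : Measure.dirac z (cyl y) = 0 := by
  rw [Measure.dirac_apply' _ (measurable_cyl _)]
  have : z ∉ cyl y := fun hz => h ((mem_cyl_iff z y).1 hz)
  simp [Set.indicator_of_notMem this]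

lemma klDiv_dirac {X : Type} [Fintype X] [DecidableEq X] [MeasurableSpace X]
    [MeasurableSingletonClass X] (n : ℕ) (z : ℕ → X) (ρ : Measure (ℕ → X)) :
    klDiv n (Measure.dirac z) ρ = klTerm 1 (ρ (cyl (pre z n))).toReal := by
  rw [klDiv, Finset.sum_eq_single (pre z n)]
  · rw [dirac_cyl_self]; simp
  · intro y _ hy
    rw [dirac_cyl_ne z hy]; simp [klTerm]
  · intro h; exact absurd (Finset.mem_univ _) h

lemma klTerm_one_pos {q : ℝ} (hq : q ≠ 0) :
    klTerm 1 q = ((-Real.logb 2 q : ℝ) : EReal) := by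
  rw [klTerm, if_neg one_ne_zero, if_neg hq]
  congr 1
  rw [one_mul, one_div, Real.logb_inv]

lemma klTerm_one_zero : klTerm 1 0 = ⊤ := by simp [klTerm]

/-! ### Counting lemmas -/

lemma cnt_append {a b : ℕ} (u : Fin a → Fin 2) (v : Fin b → Fin 2) :
    cnt (Fin.append u v) = cnt u + cnt v := by
  have h : ∀ {m : ℕ} (w : Fin m → Fin 2),
      (cnt w : ℕ) = ∑ i : Fin m, (if w i = 1 then 1 else 0) := by
    intro m w
    rw [cnt, Finset.card_filter]
  rw [h, h, h, Fin.sum_univ_add]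
  simp [Fin.append_left, Fin.append_right]

lemma cnt_pre (z : ℕ → Fin 2) (n : ℕ) : cnt (pre z n) = Kc z n := by
  rw [cnt, Kc, Finset.card_filter, Finset.card_filter]
  exact Fin.sum_univ_eq_sum_range (fun i => if z i = 1 then 1 else 0) n

lemma Kc_mono (z : ℕ → Fin 2) {n m : ℕ} (h : n ≤ m) : Kc z n ≤ Kc z m :=
  Finset.card_le_card (Finset.filter_subset_filter _ (Finset.range_subset_range.2 h))

lemma Kc_diff (z : ℕ → Fin 2) {n m : ℕ} (h : n ≤ m) : Kc z m ≤ Kc z n + (m - n) := by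
  have : Finset.range m = Finset.range n ∪ Finset.Ico n m := by
    rw [Finset.range_eq_Ico, Finset.range_eq_Ico]
    exact (Finset.Ico_union_Ico_eq_Ico (Nat.zero_le n) h).symm
  rw [Kc, Kc, this, Finset.filter_union]
  refine (Finset.card_union_le _ _).trans ?_
  gcongr
  exact (Finset.card_filter_le _ _).trans (by rw [Nat.card_Ico])

lemma Kc_le (z : ℕ → Fin 2) (n : ℕ) : Kc z n ≤ n :=
  (Finset.card_filter_le _ _).trans (by rw [Finset.card_range])

lemma card_cnt (m k : ℕ) :
    (Finset.univ.filter (fun v : Fin m → Fin 2 => cnt v = k)).card = m.choose k := by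
  have := Finset.card_powersetCard k (Finset.univ : Finset (Fin m))
  rw [Finset.card_univ, Fintype.card_fin] at this
  rw [← this]
  apply Finset.card_bij' (fun v _ => Finset.univ.filter (fun i => v i = 1))
      (fun S _ => fun i => if i ∈ S then 1 else 0)
  · intro v hv
    funext i
    by_cases h : v i = 1
    · simp [h]
    · have h0 : v i = 0 := by omega
      simp [h, h0]
  · intro S hS
    ext i
    by_cases h : i ∈ S <;> simp [h]
  · intro v hv
    rw [Finset.mem_powersetCard]
    exact ⟨Finset.filter_subset _ _ |>.trans (le_refl _), (Finset.mem_filter.1 hv).2⟩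
  · intro S hS
    rw [Finset.mem_powersetCard] at hS
    rw [Finset.mem_filter]
    refine ⟨Finset.mem_univ _, ?_⟩
    rw [cnt]
    have : (Finset.univ.filter (fun i => (if i ∈ S then (1:Fin 2) else 0) = 1)) = S := by
      ext i
      by_cases h : i ∈ S <;> simp [h]
    rw [this, hS.2]

/-! ### The binomial lower bound -/

lemma choose_ratio (s : ℕ) :
    (s+1) * (2*s+1) * (2*s+2) * Nat.choose (3*s+3) (s+1)
      = (3*s+1) * (3*s+2) * (3*s+3) * Nat.choose (3*s) s := by
  have h1 := Nat.choose_mul_factorial_mul_factorial (show s ≤ 3*s by omega)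
  have e0 : 3*s - s = 2*s := by omega
  rw [e0] at h1
  have h2 := Nat.choose_mul_factorial_mul_factorial (show s+1 ≤ 3*s+3 by omega)
  have e1 : (3*s+3) - (s+1) = 2*s+2 := by omega
  rw [e1] at h2
  have hf1 : (s+1).factorial = (s+1) * s.factorial := Nat.factorial_succ s
  have hf2 : (2*s+2).factorial = (2*s+2) * (2*s+1) * (2*s).factorial := by
    have : 2*s+2 = (2*s+1) + 1 := by omega
    rw [this, Nat.factorial_succ, Nat.factorial_succ]
    ring
  have hf3 : (3*s+3).factorial = (3*s+3) * (3*s+2) * (3*s+1) * (3*s).factorial := by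
    have : 3*s+3 = (3*s+2) + 1 := by omega
    rw [this, Nat.factorial_succ]
    have : 3*s+2 = (3*s+1) + 1 := by omega
    rw [this, Nat.factorial_succ]
    have : 3*s+1 = (3*s) + 1 := by omega
    rw [this, Nat.factorial_succ]
    ring
  have hpos : 0 < s.factorial * (2*s).factorial :=
    Nat.mul_pos s.factorial_pos (2*s).factorial_pos
  apply Nat.eq_of_mul_eq_mul_right hpos
  calc (s+1) * (2*s+1) * (2*s+2) * Nat.choose (3*s+3) (s+1) * (s.factorial * (2*s).factorial)
      = Nat.choose (3*s+3) (s+1) * ((s+1) * s.factorial) * ((2*s+2) * (2*s+1) * (2*s).factorial) := by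
        ring
    _ = Nat.choose (3*s+3) (s+1) * (s+1).factorial * (2*s+2).factorial := by rw [hf1, hf2]
    _ = (3*s+3).factorial := h2
    _ = (3*s+3) * (3*s+2) * (3*s+1) * ((3*s).factorial) := hf3
    _ = (3*s+1) * (3*s+2) * (3*s+3) * (Nat.choose (3*s) s * s.factorial * (2*s).factorial) := by
        rw [h1]; ring
    _ = (3*s+1) * (3*s+2) * (3*s+3) * Nat.choose (3*s) s * (s.factorial * (2*s).factorial) := by
        ring

lemma choose_lb (s : ℕ) : 27^s ≤ (3*s+1) * Nat.choose (3*s) s * 4^s := by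
  induction s with
  | zero => simp
  | succ t ih =>
    have hid := choose_ratio t
    have e : 3*(t+1) = 3*t+3 := by ring
    rw [e]
    have key : 27 * ((t+1)*(2*t+1)*(2*t+2)) ≤ 4*((3*t+4)*((3*t+2)*(3*t+3))) := by
      nlinarith [sq_nonneg t]
    have hP : 0 < (t+1)*(2*t+1)*(2*t+2) := by positivity
    apply Nat.le_of_mul_le_mul_right _ hP
    calc 27^(t+1) * ((t+1)*(2*t+1)*(2*t+2))
        = 27 * ((t+1)*(2*t+1)*(2*t+2)) * 27^t := by ring
      _ ≤ 27 * ((t+1)*(2*t+1)*(2*t+2)) * ((3*t+1) * Nat.choose (3*t) t * 4^t) :=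
          Nat.mul_le_mul_left _ ih
      _ ≤ (4*((3*t+4)*((3*t+2)*(3*t+3)))) * ((3*t+1) * Nat.choose (3*t) t * 4^t) :=
          Nat.mul_le_mul_right _ key
      _ = (3*t+4) * 4^(t+1) * ((3*t+1) * (3*t+2) * (3*t+3) * Nat.choose (3*t) t) := by ring
      _ = (3*t+4) * 4^(t+1) * ((t+1) * (2*t+1) * (2*t+2) * Nat.choose (3*t+3) (t+1)) := by
          rw [← hid]
      _ = (3*t+3+1) * Nat.choose (3*t+3) (t+1) * 4^(t+1) * ((t+1)*(2*t+1)*(2*t+2)) := by ring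

/-! ### Nb / Mb arithmetic -/

lemma Nb_eq (t : ℕ) : Nb t = 3 * Mb t := by
  induction t with
  | zero => rfl
  | succ s ih => show Nb s + 3*(s+1) = 3 * (Mb s + (s+1)); omega

lemma Mb_eq (t : ℕ) : 2 * Mb t = t * (t+1) := by
  induction t with
  | zero => rfl
  | succ s ih => show 2 * (Mb s + (s+1)) = _; nlinarith

lemma Nb_ge (t : ℕ) : t ≤ Nb t := by
  induction t with
  | zero => exact Nat.le_refl 0
  | succ s ih => show s + 1 ≤ Nb s + 3*(s+1); omega

lemma Nb_mono : Monotone Nb := by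
  apply monotone_nat_of_le_succ
  intro t; show Nb t ≤ Nb t + 3*(t+1); omega

lemma Mb_sum (t : ℕ) : Mb t = ∑ s ∈ Finset.range t, (s+1) := by
  induction t with
  | zero => rfl
  | succ s ih => rw [Finset.sum_range_succ, ← ih]; rfl

/-! ### measure splitting and selection of extensions -/

lemma cyl_eq_biUnion {a b : ℕ} (u : Fin a → Fin 2) :
    cyl u = ⋃ v ∈ (Finset.univ : Finset (Fin b → Fin 2)), cyl (Fin.append u v) := by
  ext ω
  simp only [Set.mem_iUnion, Finset.mem_univ, exists_true_left, true_and]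
  constructor
  · intro h
    refine ⟨fun j => ω (a + j), fun i => ?_⟩
    refine Fin.addCases (fun i0 => ?_) (fun j => ?_) i
    · rw [Fin.append_left]; simpa using h i0
    · rw [Fin.append_right]; simp
  · rintro ⟨v, hv⟩ i
    have := hv (Fin.castAdd b i)
    rwa [Fin.append_left, Fin.coe_castAdd] at this

lemma sum_append_cyl (ρ : Measure (ℕ → Fin 2)) {a : ℕ} (b : ℕ) (u : Fin a → Fin 2) :
    ∑ v : Fin b → Fin 2, ρ (cyl (Fin.append u v)) = ρ (cyl u) := by
  rw [cyl_eq_biUnion (b := b) u, measure_biUnion_finset]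
  · intro v _ w _ hvw
    refine Set.disjoint_left.2 fun ω h1 h2 => hvw ?_
    funext j
    have e1 := h1 (Fin.natAdd a j)
    have e2 := h2 (Fin.natAdd a j)
    rw [Fin.append_right] at e1 e2
    rw [← e1, ← e2]
  · exact fun v _ => measurable_cyl _

lemma exists_ext (ρ : Measure (ℕ → Fin 2)) {a : ℕ} (u : Fin a → Fin 2) (b k : ℕ) (hk : k ≤ b) :
    ∃ v : Fin b → Fin 2, cnt v = k ∧
      (b.choose k : ℝ≥0∞) * ρ (cyl (Fin.append u v)) ≤ ρ (cyl u) := by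
  classical
  set V := Finset.univ.filter (fun v : Fin b → Fin 2 => cnt v = k) with hV
  have hcard : V.card = b.choose k := card_cnt b k
  have hne : V.Nonempty := Finset.card_pos.mp (by rw [hcard]; exact Nat.choose_pos hk)
  obtain ⟨v, hvV, hmin⟩ := Finset.exists_min_image V (fun v => ρ (cyl (Fin.append u v))) hne
  refine ⟨v, (Finset.mem_filter.1 hvV).2, ?_⟩
  calc (b.choose k : ℝ≥0∞) * ρ (cyl (Fin.append u v))
      = V.card • ρ (cyl (Fin.append u v)) := by rw [hcard, nsmul_eq_mul]
    _ ≤ ∑ w ∈ V, ρ (cyl (Fin.append u w)) := Finset.card_nsmul_le_sum V _ _ hmin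
    _ ≤ ∑ w : Fin b → Fin 2, ρ (cyl (Fin.append u w)) :=
        Finset.sum_le_sum_of_subset (Finset.subset_univ V)
    _ = ρ (cyl u) := sum_append_cyl ρ b u

/-! ### the recursive chain of prefixes -/

noncomputable def chain (ρ : Measure (ℕ → Fin 2)) (hρ : ρ Set.univ = 1) :
    (t : ℕ) → {u : Fin (Nb t) → Fin 2 // cnt u = Mb t ∧
      ρ (cyl u) ≤ ∏ s ∈ Finset.range t, (((3*(s+1)).choose (s+1) : ℝ≥0∞))⁻¹}
  | 0 => ⟨fun _ => 0, by
      constructor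
      · rfl
      · have hcyl : cyl (fun _ : Fin (Nb 0) => (0 : Fin 2)) = Set.univ := by
          ext ω; simp only [cyl, Set.mem_setOf_eq, Set.mem_univ, iff_true]
          intro i; exact absurd i.2 (by simp [Nb])
        rw [hcyl, hρ]
        simp⟩
  | (t+1) => by
      refine ⟨Fin.append (chain ρ hρ t).1
        (Classical.choose (exists_ext ρ (chain ρ hρ t).1 (3*(t+1)) (t+1) (by omega))), ?_, ?_⟩
      · refine (cnt_append (chain ρ hρ t).1 _).trans ?_
        rw [(chain ρ hρ t).2.1,
          (Classical.choose_spec (exists_ext ρ (chain ρ hρ t).1 (3*(t+1)) (t+1) (by omega))).1]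
        rfl
      · have hv := (Classical.choose_spec (exists_ext ρ (chain ρ hρ t).1 (3*(t+1)) (t+1)
          (by omega))).2
        have hc0 : ((3*(t+1)).choose (t+1) : ℝ≥0∞) ≠ 0 := by
          simp only [ne_eq, Nat.cast_eq_zero]
          exact (Nat.choose_pos (by omega)).ne'
        have hct : ((3*(t+1)).choose (t+1) : ℝ≥0∞) ≠ ⊤ := ENNReal.natCast_ne_top _
        have key : ρ (cyl (Fin.append (chain ρ hρ t).1
            (Classical.choose (exists_ext ρ (chain ρ hρ t).1 (3*(t+1)) (t+1) (by omega)))))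
            ≤ (((3*(t+1)).choose (t+1) : ℝ≥0∞))⁻¹ * ρ (cyl (chain ρ hρ t).1) := by
          rw [← one_mul (ρ (cyl (Fin.append _ _))), ← ENNReal.inv_mul_cancel hc0 hct, mul_assoc]
          exact mul_le_mul_right hv _
        refine key.trans ?_
        rw [Finset.prod_range_succ,
          mul_comm ((∏ s ∈ Finset.range t, (((3*(s+1)).choose (s+1) : ℝ≥0∞))⁻¹)) _]
        exact mul_le_mul_right (chain ρ hρ t).2.2 _

lemma chain_ext (ρ : Measure (ℕ → Fin 2)) (hρ : ρ Set.univ = 1) (t : ℕ) (i : Fin (Nb t)) :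
    (chain ρ hρ (t+1)).1 (Fin.castAdd (3*(t+1)) i) = (chain ρ hρ t).1 i := by
  show (Fin.append (chain ρ hρ t).1 _) (Fin.castAdd (3*(t+1)) i) = _
  exact Fin.append_left _ _ i

lemma chain_agree (ρ : Measure (ℕ → Fin 2)) (hρ : ρ Set.univ = 1) {t t' : ℕ} (h : t ≤ t')
    (i : Fin (Nb t)) :
    (chain ρ hρ t').1 (Fin.castLE (Nb_mono h) i) = (chain ρ hρ t).1 i := by
  induction t', h using Nat.le_induction with
  | base => rfl
  | succ t' ht' ih =>
    have e : Fin.castLE (Nb_mono (le_trans ht' (Nat.le_succ t'))) i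
        = Fin.castAdd (3*(t'+1)) (Fin.castLE (Nb_mono ht') i) := Fin.ext rfl
    rw [e, chain_ext, ih]

/-- the constructed sequence -/
noncomputable def xseq (ρ : Measure (ℕ → Fin 2)) (hρ : ρ Set.univ = 1) : ℕ → Fin 2 :=
  fun n => (chain ρ hρ (n+1)).1 ⟨n, lt_of_lt_of_le (Nat.lt_succ_self n) (Nb_ge (n+1))⟩

lemma xseq_prefix (ρ : Measure (ℕ → Fin 2)) (hρ : ρ Set.univ = 1) (t : ℕ) :
    pre (xseq ρ hρ) (Nb t) = (chain ρ hρ t).1 := by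
  funext i
  show xseq ρ hρ (i : ℕ) = (chain ρ hρ t).1 i
  rcases le_total ((i : ℕ) + 1) t with h | h
  · have := chain_agree ρ hρ h (⟨(i : ℕ), lt_of_lt_of_le (Nat.lt_succ_self _) (Nb_ge _)⟩ :
      Fin (Nb ((i : ℕ)+1)))
    rw [xseq, ← this]
    exact congrArg _ (Fin.ext rfl)
  · have := chain_agree ρ hρ h i
    rw [xseq, ← this]
    exact congrArg _ (Fin.ext rfl)

lemma xseq_Kc (ρ : Measure (ℕ → Fin 2)) (hρ : ρ Set.univ = 1) (t : ℕ) :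
    Kc (xseq ρ hρ) (Nb t) = Mb t := by
  rw [← cnt_pre, xseq_prefix]
  exact (chain ρ hρ t).2.1

lemma xseq_bound (ρ : Measure (ℕ → Fin 2)) (hρ : ρ Set.univ = 1) (t : ℕ) :
    ρ (cyl (pre (xseq ρ hρ) (Nb t)))
      ≤ ∏ s ∈ Finset.range t, (((3*(s+1)).choose (s+1) : ℝ≥0∞))⁻¹ := by
  rw [xseq_prefix]
  exact (chain ρ hρ t).2.2

/-! ### frequency of the constructed sequence -/

lemma freq_third (z : ℕ → Fin 2) (hb : ∀ t, Kc z (Nb t) = Mb t) :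
    Tendsto (fun n : ℕ => (Kc z n : ℝ) / n) atTop (nhds (1/3)) := by
  rw [Metric.tendsto_atTop]
  intro ε hε
  obtain ⟨t₀, ht₀⟩ := exists_nat_gt (4/(3*ε))
  have ht₀1 : 1 ≤ t₀ := by
    by_contra h
    push_neg at h
    interval_cases t₀
    · simp only [Nat.cast_zero] at ht₀
      have : (0:ℝ) < 4/(3*ε) := by positivity
      linarith
  refine ⟨max (Nb t₀) 1, fun n hn => ?_⟩
  have hn1 : 1 ≤ n := le_trans (le_max_right _ _) hn
  have hnt₀ : Nb t₀ ≤ n := le_trans (le_max_left _ _) hn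
  set t := Nat.findGreatest (fun s => Nb s ≤ n) n with hT
  have hNt : Nb t ≤ n :=
    Nat.findGreatest_spec (P := fun s => Nb s ≤ n) (m := 0) (Nat.zero_le n) (by simp [Nb])
  have htt₀ : t₀ ≤ t :=
    Nat.le_findGreatest (P := fun s => Nb s ≤ n) (le_trans (Nb_ge t₀) hnt₀) hnt₀
  have ht1 : 1 ≤ t := le_trans ht₀1 htt₀
  have hnN : n < Nb (t+1) := by
    by_contra h
    push_neg at h
    have h1 : t + 1 ≤ n := le_trans (Nb_ge (t+1)) h
    have := Nat.le_findGreatest (P := fun s => Nb s ≤ n) h1 h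
    omega
  have hNb1 : Nb (t+1) = Nb t + 3*(t+1) := rfl
  have hup : Kc z n ≤ Mb t + (n - Nb t) := by
    have := Kc_diff z hNt
    rwa [hb t] at this
  have hlo : Mb t ≤ Kc z n := by
    have := Kc_mono z hNt
    rwa [hb t] at this
  have hNbe := Nb_eq t
  have hMbe := Mb_eq t
  have habs : 3 * Kc z n ≤ n + 6*(t+1) ∧ n ≤ 3 * Kc z n + 3*(t+1) := by omega
  have hnR : (0:ℝ) < n := by exact_mod_cast hn1
  have htR : (0:ℝ) < t := by exact_mod_cast ht1
  have c1 : (3:ℝ) * Kc z n ≤ n + 6*(t+1) := by exact_mod_cast habs.1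
  have c2 : (n:ℝ) ≤ 3 * Kc z n + 3*(t+1) := by exact_mod_cast habs.2
  have e1 : (Kc z n : ℝ)/n - 1/3 = (3*Kc z n - n)/(3*n) := by field_simp
  have h1 : |(Kc z n : ℝ)/n - 1/3| ≤ 2*(t+1)/n := by
    rw [e1, abs_div, abs_of_pos (by positivity : (0:ℝ) < 3*n)]
    rw [div_le_div_iff₀ (by positivity) hnR]
    have habs2 : |3*(Kc z n:ℝ) - n| ≤ 6*(t+1) := abs_le.2 ⟨by linarith, by linarith⟩
    nlinarith [abs_nonneg (3*(Kc z n:ℝ) - n)]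
  have h2 : 2*((t:ℝ)+1)/n ≤ 4/(3*t) := by
    have hNtR : ((Nb t : ℕ) : ℝ) ≤ n := by exact_mod_cast hNt
    have hNbR : ((Nb t : ℕ) : ℝ) = 3 * Mb t := by exact_mod_cast hNbe
    have hMbR : 2 * ((Mb t : ℕ) : ℝ) = t * (t+1) := by exact_mod_cast hMbe
    rw [div_le_div_iff₀ hnR (by positivity)]
    nlinarith
  have h3 : 4/(3*(t:ℝ)) ≤ 4/(3*t₀) := by
    have : (t₀:ℝ) ≤ t := by exact_mod_cast htt₀
    have ht₀R : (0:ℝ) < t₀ := by exact_mod_cast ht₀1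
    gcongr
  have h4 : 4/(3*(t₀:ℝ)) < ε := by
    have ht₀R : (0:ℝ) < t₀ := by exact_mod_cast ht₀1
    rw [div_lt_iff₀ (by positivity)]
    rw [div_lt_iff₀ (by positivity)] at ht₀
    nlinarith
  calc dist ((Kc z n : ℝ)/n) (1/3) = |(Kc z n : ℝ)/n - 1/3| := Real.dist_eq _ _
    _ ≤ 2*(t+1)/n := h1
    _ ≤ 4/(3*t) := h2
    _ ≤ 4/(3*t₀) := h3
    _ < ε := h4

/-! ### analysis : logs of the binomial coefficients -/

lemma logb_two_two : Real.logb 2 2 = 1 := by simp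

lemma binEnt_third : binEnt (1/3) = Real.logb 2 3 - 2/3 := by
  have h1 : Real.logb 2 ((1:ℝ)/3) = -Real.logb 2 3 := by
    rw [one_div, Real.logb_inv]
  have h2 : Real.logb 2 ((2:ℝ)/3) = 1 - Real.logb 2 3 := by
    rw [Real.logb_div (by norm_num) (by norm_num), logb_two_two]
  rw [binEnt]
  norm_num [h1, h2]
  ring

lemma logb_choose (s : ℕ) :
    3*((s:ℝ)+1) * binEnt (1/3) - Real.logb 2 (3*(s:ℝ)+4)
      ≤ Real.logb 2 (((3*(s+1)).choose (s+1) : ℕ) : ℝ) := by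
  have h := choose_lb (s+1)
  have hR : (27:ℝ)^(s+1) ≤ (3*((s:ℝ)+1)+1) * (((3*(s+1)).choose (s+1) : ℕ) : ℝ) * 4^(s+1) := by
    exact_mod_cast h
  have hC : (0:ℝ) < (((3*(s+1)).choose (s+1) : ℕ) : ℝ) := by
    exact_mod_cast Nat.choose_pos (by omega)
  have hlog := Real.logb_le_logb_of_le (by norm_num : (1:ℝ) < 2) (by positivity) hR
  rw [Real.logb_pow] at hlog
  rw [Real.logb_mul (by positivity) (by positivity), Real.logb_mul (by positivity) hC.ne',
    Real.logb_pow] at hlog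
  have h27 : Real.logb 2 (27:ℝ) = 3 * Real.logb 2 3 := by
    rw [show (27:ℝ) = 3^(3:ℕ) by norm_num, Real.logb_pow]; norm_num
  have h4 : Real.logb 2 (4:ℝ) = 2 := by
    rw [show (4:ℝ) = 2^(2:ℕ) by norm_num, Real.logb_pow]
    simp
  rw [h27, h4] at hlog
  rw [binEnt_third]
  have e : 3*((s:ℝ)+1)+1 = 3*(s:ℝ)+4 := by ring
  rw [e] at hlog
  push_cast at hlog
  nlinarith [hlog]

lemma err_tendsto :
    Tendsto (fun t : ℕ => (∑ s ∈ Finset.range t, Real.logb 2 (3*(s:ℝ)+4)) / (Nb t : ℝ))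
      atTop (nhds 0) := by
  have hlogdiv : Tendsto (fun x : ℝ => Real.log x / x) atTop (nhds 0) :=
    Real.isLittleO_log_id_atTop.tendsto_div_nhds_zero
  have h1 : Tendsto (fun t : ℕ => (t:ℝ)+1) atTop atTop :=
    tendsto_atTop_add_const_right _ 1 tendsto_natCast_atTop_atTop
  have h2 : Tendsto (fun t : ℕ => Real.log ((t:ℝ)+1) / ((t:ℝ)+1)) atTop (nhds 0) :=
    hlogdiv.comp h1
  have h3 : Tendsto (fun t : ℕ => Real.log 4 / ((t:ℝ)+1)) atTop (nhds 0) :=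
    tendsto_const_nhds.div_atTop h1
  have hB : Tendsto (fun t : ℕ => (Real.log 2)⁻¹ *
      (Real.log 4 / ((t:ℝ)+1) + Real.log ((t:ℝ)+1) / ((t:ℝ)+1))) atTop (nhds 0) := by
    have := (h3.add h2).const_mul (Real.log 2)⁻¹
    simpa using this
  apply squeeze_zero' (g := fun t : ℕ => (Real.log 2)⁻¹ *
      (Real.log 4 / ((t:ℝ)+1) + Real.log ((t:ℝ)+1) / ((t:ℝ)+1))) ?_ ?_ hB
  · filter_upwards with t
    apply div_nonneg _ (by positivity)
    apply Finset.sum_nonneg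
    intro s _
    apply Real.logb_nonneg (by norm_num)
    have : (0:ℝ) ≤ (s:ℝ) := by positivity
    linarith
  · filter_upwards [eventually_ge_atTop 1] with t ht
    have htR : (1:ℝ) ≤ (t:ℝ) := by exact_mod_cast ht
    have hlog2 : (0:ℝ) < Real.log 2 := Real.log_pos (by norm_num)
    have hsum : (∑ s ∈ Finset.range t, Real.logb 2 (3*(s:ℝ)+4)) ≤ t * Real.logb 2 (3*(t:ℝ)+4) := by
      calc (∑ s ∈ Finset.range t, Real.logb 2 (3*(s:ℝ)+4))
          ≤ ∑ s ∈ Finset.range t, Real.logb 2 (3*(t:ℝ)+4) := by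
            apply Finset.sum_le_sum
            intro s hs
            have hsR : (s:ℝ) ≤ (t:ℝ) := by
              exact_mod_cast (Finset.mem_range.1 hs).le
            exact Real.logb_le_logb_of_le (by norm_num : (1:ℝ) < 2) (by positivity) (by linarith)
        _ = t * Real.logb 2 (3*(t:ℝ)+4) := by rw [Finset.sum_const, Finset.card_range]; simp
    have hNb : (Nb t : ℝ) = 3 * (t * (t+1)) / 2 := by
      have e1 : (2 * Nb t : ℕ) = 3 * (t * (t+1)) := by rw [Nb_eq]; have := Mb_eq t; omega
      have : (2:ℝ) * (Nb t : ℝ) = 3 * ((t:ℝ) * ((t:ℝ)+1)) := by exact_mod_cast e1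
      linarith
    have hNbpos : (0:ℝ) < (Nb t : ℝ) := by rw [hNb]; positivity
    have hlogb_le : Real.logb 2 (3*(t:ℝ)+4)
        ≤ (Real.log 2)⁻¹ * (Real.log 4 + Real.log ((t:ℝ)+1)) := by
      rw [Real.logb, div_eq_inv_mul]
      apply mul_le_mul_of_nonneg_left _ (by positivity)
      calc Real.log (3*(t:ℝ)+4) ≤ Real.log (4 * ((t:ℝ)+1)) := by
            apply Real.log_le_log (by positivity)
            linarith
        _ = Real.log 4 + Real.log ((t:ℝ)+1) := Real.log_mul (by norm_num) (by positivity)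
    have hlogb_nonneg : 0 ≤ Real.logb 2 (3*(t:ℝ)+4) :=
      Real.logb_nonneg (by norm_num) (by linarith)
    have hlog4 : (0:ℝ) ≤ Real.log 4 := Real.log_nonneg (by norm_num)
    have hlogt : (0:ℝ) ≤ Real.log ((t:ℝ)+1) := Real.log_nonneg (by linarith)
    calc (∑ s ∈ Finset.range t, Real.logb 2 (3*(s:ℝ)+4)) / (Nb t : ℝ)
        ≤ (t * Real.logb 2 (3*(t:ℝ)+4)) / (Nb t : ℝ) := by gcongr
      _ ≤ (t * Real.logb 2 (3*(t:ℝ)+4)) / ((t:ℝ) * ((t:ℝ)+1)) := by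
          have hnum : (0:ℝ) ≤ t * Real.logb 2 (3*(t:ℝ)+4) :=
            mul_nonneg (by positivity) hlogb_nonneg
          have hden : (t:ℝ) * ((t:ℝ)+1) ≤ (Nb t : ℝ) := by rw [hNb]; nlinarith
          exact div_le_div_of_nonneg_left hnum (by positivity) hden
      _ = Real.logb 2 (3*(t:ℝ)+4) / ((t:ℝ)+1) := by
          rw [mul_div_mul_left _ _ (by positivity : (t:ℝ) ≠ 0)]
      _ ≤ (Real.log 2)⁻¹ * (Real.log 4 / ((t:ℝ)+1) + Real.log ((t:ℝ)+1) / ((t:ℝ)+1)) := by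
          rw [← add_div, ← mul_div_assoc]
          gcongr

/-- lower bound on `-logb` of a real below the product of inverse binomials -/
lemma chain_logb_bound (t : ℕ) (r : ℝ) (hr : 0 < r)
    (hle : r ≤ (∏ s ∈ Finset.range t, (((3*(s+1)).choose (s+1) : ℝ≥0∞))⁻¹).toReal) :
    (Nb t : ℝ) * binEnt (1/3) - (∑ s ∈ Finset.range t, Real.logb 2 (3*(s:ℝ)+4))
      ≤ -Real.logb 2 r := by
  have hCpos : ∀ s : ℕ, (0:ℝ) < (((3*(s+1)).choose (s+1) : ℕ) : ℝ) := fun s => by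
    exact_mod_cast Nat.choose_pos (by omega)
  have htoReal : (∏ s ∈ Finset.range t, (((3*(s+1)).choose (s+1) : ℝ≥0∞))⁻¹).toReal
      = ∏ s ∈ Finset.range t, ((((3*(s+1)).choose (s+1) : ℕ) : ℝ))⁻¹ := by
    rw [ENNReal.toReal_prod]
    apply Finset.prod_congr rfl
    intro s _
    rw [ENNReal.toReal_inv]
    norm_num
  rw [htoReal] at hle
  have h1 : Real.logb 2 r ≤ Real.logb 2 (∏ s ∈ Finset.range t,
      ((((3*(s+1)).choose (s+1) : ℕ) : ℝ))⁻¹) :=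
    Real.logb_le_logb_of_le (by norm_num) hr hle
  have h2 : Real.logb 2 (∏ s ∈ Finset.range t, ((((3*(s+1)).choose (s+1) : ℕ) : ℝ))⁻¹)
      = -∑ s ∈ Finset.range t, Real.logb 2 (((3*(s+1)).choose (s+1) : ℕ) : ℝ) := by
    rw [Real.logb, Real.log_prod (fun s _ => (inv_pos.2 (hCpos s)).ne')]
    simp only [Real.log_inv]
    rw [Finset.sum_neg_distrib, neg_div, Finset.sum_div]
    rfl
  rw [h2] at h1
  have h4 : ∑ s ∈ Finset.range t, (3*((s:ℝ)+1) * binEnt (1/3) - Real.logb 2 (3*(s:ℝ)+4))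
      ≤ ∑ s ∈ Finset.range t, Real.logb 2 (((3*(s+1)).choose (s+1) : ℕ) : ℝ) :=
    Finset.sum_le_sum fun s _ => logb_choose s
  have h5 : ∑ s ∈ Finset.range t, (3*((s:ℝ)+1) * binEnt (1/3) - Real.logb 2 (3*(s:ℝ)+4))
      = (Nb t : ℝ) * binEnt (1/3) - ∑ s ∈ Finset.range t, Real.logb 2 (3*(s:ℝ)+4) := by
    rw [Finset.sum_sub_distrib, ← Finset.sum_mul]
    have hn : Nb t = ∑ s ∈ Finset.range t, 3*(s+1) := by
      rw [Nb_eq, Mb_sum, Finset.mul_sum]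
    have hnR : (Nb t : ℝ) = ∑ s ∈ Finset.range t, (3*((s:ℝ)+1)) := by
      rw [hn]
      push_cast
      rfl
    rw [hnR]
  linarith [h4, h5, h1]

/-! ### limsup helper -/

lemma limsup_of_ev_coe {f : ℕ → EReal} {g : ℕ → ℝ} {c : ℝ}
    (hev : ∀ᶠ n in atTop, f n = ((g n : ℝ) : EReal)) (hg : Tendsto g atTop (nhds c)) :
    Filter.limsup f atTop = (c : EReal) := by
  have : Tendsto f atTop (nhds (c : EReal)) :=
    Tendsto.congr' (hev.mono fun n h => h.symm)
      ((continuous_coe_real_ereal.tendsto c).comp hg)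
  exact this.limsup_eq

/-! ### part A : the value of `D(δ_x, β)` -/

lemma tendstoA {K : ℕ → ℕ} (hKle : ∀ n, K n ≤ n)
    (hK : Tendsto (fun n : ℕ => (K n : ℝ)/n) atTop (nhds (1/3))) :
    Tendsto (fun n : ℕ => ((n:ℝ))⁻¹ * (-Real.logb 2 ((1/3:ℝ)^(K n) * (2/3:ℝ)^(n - K n))))
      atTop (nhds (binEnt (1/3))) := by
  set L := Real.logb 2 3 with hL
  have h1 : Real.logb 2 ((1:ℝ)/3) = -L := by rw [one_div, Real.logb_inv]
  have h2 : Real.logb 2 ((2:ℝ)/3) = 1 - L := by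
    rw [Real.logb_div (by norm_num) (by norm_num), logb_two_two]
  have key : ∀ᶠ n : ℕ in atTop, ((n:ℝ))⁻¹ * (-Real.logb 2 ((1/3:ℝ)^(K n) * (2/3:ℝ)^(n - K n)))
      = ((K n : ℝ)/n) * L + (1 - (K n : ℝ)/n) * (L - 1) := by
    filter_upwards [eventually_ge_atTop 1] with n hn
    have hn0 : (n:ℝ) ≠ 0 := by positivity
    rw [Real.logb_mul (by positivity) (by positivity), Real.logb_pow, Real.logb_pow, h1, h2,
      Nat.cast_sub (hKle n)]
    field_simp
    ring
  have lim : Tendsto (fun n : ℕ => ((K n : ℝ)/n) * L + (1 - (K n : ℝ)/n) * (L - 1)) atTop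
      (nhds ((1/3) * L + (1 - 1/3) * (L - 1))) :=
    (hK.mul_const L).add ((tendsto_const_nhds.sub hK).mul_const (L - 1))
  have heq : (1/3) * L + (1 - 1/3 : ℝ) * (L - 1) = binEnt (1/3) := by
    rw [binEnt_third]; ring
  rw [heq] at lim
  exact Tendsto.congr' (key.mono fun n h => h.symm) lim

lemma beta_cyl_toReal {β : Measure (ℕ → Fin 2)}
    (hβcyl : ∀ (n : ℕ) (y : Fin n → Fin 2),
      β (cyl y) = ∏ i : Fin n, (if y i = 1 then (1 / 3 : ℝ≥0∞) else 2 / 3))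
    (n : ℕ) (y : Fin n → Fin 2) :
    (β (cyl y)).toReal = (1/3 : ℝ) ^ (cnt y) * (2/3 : ℝ) ^ (n - cnt y) := by
  rw [hβcyl n y, ENNReal.toReal_prod]
  have h : ∀ i : Fin n, ((if y i = 1 then (1 / 3 : ℝ≥0∞) else 2 / 3)).toReal
      = (if y i = 1 then (1/3 : ℝ) else 2/3) := by
    intro i; split <;> simp
  simp_rw [h]
  rw [Finset.prod_ite (fun _ => (1/3:ℝ)) (fun _ => (2/3:ℝ)), Finset.prod_const, Finset.prod_const]
  have hc : (Finset.univ.filter (fun i => y i = 1)).card = cnt y := rfl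
  have h1 : (Finset.univ.filter (fun i => ¬ y i = 1)).card = n - cnt y := by
    have h2 : (Finset.univ.filter (fun i => y i = 1)).card
        + (Finset.univ.filter (fun i => ¬ y i = 1)).card = n := by
      rw [Finset.card_filter_add_card_filter_not]
      simp
    omega
  rw [hc, h1]

lemma Dbar_dirac_beta {β : Measure (ℕ → Fin 2)}
    (hβcyl : ∀ (n : ℕ) (y : Fin n → Fin 2),
      β (cyl y) = ∏ i : Fin n, (if y i = 1 then (1 / 3 : ℝ≥0∞) else 2 / 3))
    (x : ℕ → Fin 2)
    (hx : Tendsto (fun n : ℕ => (Kc x n : ℝ) / n) atTop (nhds (1/3))) :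
    Dbar (Measure.dirac x) β = ((binEnt (1/3) : ℝ) : EReal) := by
  apply limsup_of_ev_coe
      (g := fun n : ℕ => ((n:ℝ))⁻¹ *
        (-Real.logb 2 ((1/3:ℝ)^(Kc x n) * (2/3:ℝ)^(n - Kc x n)))) ?_ (tendstoA (Kc_le x) hx)
  filter_upwards with n
  have hq : (β (cyl (pre x n))).toReal = (1/3 : ℝ) ^ (Kc x n) * (2/3 : ℝ) ^ (n - Kc x n) := by
    rw [beta_cyl_toReal hβcyl n (pre x n), cnt_pre]
  have hqpos : (0:ℝ) < (1/3 : ℝ) ^ (Kc x n) * (2/3 : ℝ) ^ (n - Kc x n) := by positivity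
  rw [klDiv_dirac n x β, hq, klTerm_one_pos hqpos.ne', ← EReal.coe_mul]

/-! ### part C : the lower bound against an arbitrary probability measure -/

lemma Dbar_dirac_ge (ρ : Measure (ℕ → Fin 2)) (hρ : IsProbabilityMeasure ρ) :
    ∃ x : ℕ → Fin 2, Tendsto (fun n : ℕ => (Kc x n : ℝ) / n) atTop (nhds (1/3)) ∧
      ((binEnt (1/3) : ℝ) : EReal) ≤ Dbar (Measure.dirac x) ρ := by
  have hρ1 : ρ Set.univ = 1 := hρ.measure_univ
  refine ⟨xseq ρ hρ1, freq_third _ (xseq_Kc ρ hρ1), ?_⟩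
  set x := xseq ρ hρ1 with hx
  set f := fun n : ℕ => (((n : ℝ)⁻¹ : ℝ) : EReal) * klDiv n (Measure.dirac x) ρ with hf
  suffices H : ∀ r : ℝ, r < binEnt (1/3) → (r : EReal) ≤ Dbar (Measure.dirac x) ρ by
    by_contra hlt
    push_neg at hlt
    obtain ⟨r, h1, h2⟩ := EReal.exists_between_coe_real hlt
    exact absurd (H r (by exact_mod_cast h2)) (not_le.2 h1)
  intro r hr
  apply le_limsup_of_frequently_le _ (by isBoundedDefault)
  by_cases hnull : ∃ n0, ρ (cyl (pre x n0)) = 0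
  · obtain ⟨n0, hn0⟩ := hnull
    rw [frequently_atTop]
    intro a
    refine ⟨max a (max n0 1), le_max_left _ _, ?_⟩
    set m := max a (max n0 1) with hm
    have hm1 : 1 ≤ m := le_trans (le_max_right n0 1) (le_max_right a _)
    have hm0 : ρ (cyl (pre x m)) = 0 :=
      measure_mono_null (cyl_anti x (le_trans (le_max_left n0 1) (le_max_right a _))) hn0
    have hkl : klDiv m (Measure.dirac x) ρ = ⊤ := by
      rw [klDiv_dirac m x ρ, hm0]
      simpa using klTerm_one_zero
    have hminv : (0:ℝ) < (m:ℝ)⁻¹ := by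
      have : (0:ℝ) < (m:ℝ) := by exact_mod_cast hm1
      positivity
    show (r : EReal) ≤ f m
    rw [hf]
    simp only
    rw [hkl, EReal.coe_mul_top_of_pos hminv]
    exact le_top
  · push_neg at hnull
    have hNbtend : Tendsto Nb atTop atTop := tendsto_atTop_mono Nb_ge tendsto_id
    apply hNbtend.frequently
    have hct : Tendsto (fun t : ℕ => binEnt (1/3)
        - (∑ s ∈ Finset.range t, Real.logb 2 (3*(s:ℝ)+4)) / (Nb t : ℝ))
        atTop (nhds (binEnt (1/3) - 0)) := tendsto_const_nhds.sub err_tendsto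
    rw [sub_zero] at hct
    have hev := hct.eventually (eventually_gt_nhds hr)
    apply Filter.Eventually.frequently
    filter_upwards [hev, eventually_ge_atTop 1] with t hct1 ht1
    have hNbt1 : 1 ≤ Nb t := le_trans ht1 (Nb_ge t)
    have hNbpos : (0:ℝ) < (Nb t : ℝ) := by exact_mod_cast hNbt1
    have hρc : ρ (cyl (pre x (Nb t))) ≠ 0 := hnull (Nb t)
    have hfin : ρ (cyl (pre x (Nb t))) ≠ ⊤ := measure_ne_top ρ _
    have hrpos : 0 < (ρ (cyl (pre x (Nb t)))).toReal := ENNReal.toReal_pos hρc hfin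
    have hprodfin : (∏ s ∈ Finset.range t, (((3*(s+1)).choose (s+1) : ℝ≥0∞))⁻¹) ≠ ⊤ := by
      apply ENNReal.prod_ne_top
      intro s _
      apply ENNReal.inv_ne_top.2
      simp only [ne_eq, Nat.cast_eq_zero]
      exact (Nat.choose_pos (by omega)).ne'
    have hle : (ρ (cyl (pre x (Nb t)))).toReal
        ≤ (∏ s ∈ Finset.range t, (((3*(s+1)).choose (s+1) : ℝ≥0∞))⁻¹).toReal :=
      ENNReal.toReal_mono hprodfin (xseq_bound ρ hρ1 t)
    have hbd := chain_logb_bound t _ hrpos hle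
    have hkl : klDiv (Nb t) (Measure.dirac x) ρ
        = ((-Real.logb 2 (ρ (cyl (pre x (Nb t)))).toReal : ℝ) : EReal) := by
      rw [klDiv_dirac (Nb t) x ρ, klTerm_one_pos hrpos.ne']
    show (r : EReal) ≤ f (Nb t)
    rw [hf]
    simp only
    rw [hkl, ← EReal.coe_mul]
    apply EReal.coe_le_coe_iff.2
    have hdiv : binEnt (1/3) - (∑ s ∈ Finset.range t, Real.logb 2 (3*(s:ℝ)+4)) / (Nb t : ℝ)
        ≤ ((Nb t : ℝ))⁻¹ * (-Real.logb 2 (ρ (cyl (pre x (Nb t)))).toReal) := by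
      rw [← div_eq_inv_mul]
      have h6 : ((Nb t:ℝ) * binEnt (1/3) - ∑ s ∈ Finset.range t, Real.logb 2 (3*(s:ℝ)+4))
          / (Nb t : ℝ) ≤ (-Real.logb 2 (ρ (cyl (pre x (Nb t)))).toReal) / (Nb t : ℝ) := by
        gcongr
      calc binEnt (1/3) - (∑ s ∈ Finset.range t, Real.logb 2 (3*(s:ℝ)+4)) / (Nb t : ℝ)
          = ((Nb t:ℝ) * binEnt (1/3) - ∑ s ∈ Finset.range t, Real.logb 2 (3*(s:ℝ)+4))
            / (Nb t : ℝ) := by field_simp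
        _ ≤ _ := h6
    linarith [hct1.le, hdiv]

set_option maxHeartbeats 1000000 in
/-- for C the set of Dirac measures on binary sequences whose limiting
frequency of ones is 1/3, V_C = h(1/3); in particular the i.i.d. Bernoulli(1/3)
measure β attains sup_{μ∈C} D(μ,β) = h(1/3) = V_C. -/
theorem statement14
    (C : Set (Measure (ℕ → Fin 2)))
    (hC : C = {m : Measure (ℕ → Fin 2) | ∃ x : ℕ → Fin 2,
      Filter.Tendsto
        (fun n : ℕ => (((Finset.range n).filter (fun i => x i = 1)).card : ℝ) / n)
        Filter.atTop (nhds (1 / 3)) ∧ m = Measure.dirac x})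
    (β : Measure (ℕ → Fin 2)) (hβ : IsProbabilityMeasure β)
    (hβcyl : ∀ (n : ℕ) (y : Fin n → Fin 2),
      β (cyl y) = ∏ i : Fin n, (if y i = 1 then (1 / 3 : ℝ≥0∞) else 2 / 3)) :
    Vmin C = ((binEnt (1 / 3) : ℝ) : EReal) ∧
    (⨆ μ ∈ C, Dbar μ β) = ((binEnt (1 / 3) : ℝ) : EReal) := by
  have hsup : (⨆ μ ∈ C, Dbar μ β) = ((binEnt (1/3) : ℝ) : EReal) := by
    obtain ⟨x₀, hx₀freq, hx₀ge⟩ := Dbar_dirac_ge β hβ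
    have hx₀mem : Measure.dirac x₀ ∈ C := by
      rw [hC]; exact ⟨x₀, hx₀freq, rfl⟩
    apply le_antisymm
    · apply iSup₂_le
      intro μ hμ
      rw [hC] at hμ
      obtain ⟨x, hxfreq, rfl⟩ := hμ
      exact (Dbar_dirac_beta hβcyl x hxfreq).le
    · calc ((binEnt (1/3):ℝ):EReal)
          = Dbar (Measure.dirac x₀) β := (Dbar_dirac_beta hβcyl x₀ hx₀freq).symm
        _ ≤ ⨆ μ ∈ C, Dbar μ β := le_biSup (f := fun μ => Dbar μ β) hx₀mem
  refine ⟨le_antisymm ?_ ?_, hsup⟩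
  · calc Vmin C ≤ ⨆ μ ∈ C, Dbar μ β :=
        iInf_le _ (⟨β, hβ⟩ : {ρ : Measure (ℕ → Fin 2) // IsProbabilityMeasure ρ})
      _ = _ := hsup
  · apply le_iInf
    rintro ⟨ρ, hρ⟩
    obtain ⟨x, hxfreq, hxge⟩ := Dbar_dirac_ge ρ hρ
    have hxmem : Measure.dirac x ∈ C := by rw [hC]; exact ⟨x, hxfreq, rfl⟩
    exact hxge.trans (le_biSup (f := fun μ => Dbar μ ρ) hxmem)
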